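/- Let h : ℤ → ℝ be finitely supported and p ∈ ℕ. The convolution operator with impulse response h annihilates all sequences α ↦ q(α) with q a polynomial of degree at most p if and only if the derivatives (h*)^{(k)}(1) = 0 for k = 0, …, p, equivalently (z⁻¹ − 1)^{p+1} divides h*(z) in the ring of Laurent polynomials. -/

import Mathlib

open Polynomial Finset LaurentPolynomial

private lemma fam_monic (c : ℕ → ℝ) (k : ℕ) :
    (∏ i ∈ range k, (X - Polynomial.C (c i))).Monic :=
  monic_prod_of_monic _ _ fun i _ => monic_X_sub_C (c i)

private lemma fam_natDegree (c : ℕ → ℝ) (k : ℕ) :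
    (∏ i ∈ range k, (X - Polynomial.C (c i))).natDegree = k := by
  rw [Polynomial.natDegree_prod _ _ fun i _ => Polynomial.X_sub_C_ne_zero (c i)]
  simp [Polynomial.natDegree_X_sub_C]

private lemma fam_degree_le (c : ℕ → ℝ) {k p : ℕ} (hk : k ≤ p) :
    (∏ i ∈ range k, (X - Polynomial.C (c i))).degree ≤ (p : WithBot ℕ) :=
  Polynomial.natDegree_le_iff_degree_le.mp (by rw [fam_natDegree]; exact hk)

private lemma span_monic (h : ℤ → ℝ) (s : Finset ℤ) (p : ℕ) (f : ℕ → Polynomial ℝ)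
    (hmon : ∀ k ≤ p, (f k).Monic) (hdeg : ∀ k ≤ p, (f k).natDegree = k)
    (h0 : ∀ k ≤ p, ∑ j ∈ s, h j * (f k).eval (j : ℝ) = 0) :
    ∀ q : Polynomial ℝ, q.degree ≤ p → ∑ j ∈ s, h j * q.eval (j : ℝ) = 0 := by
  suffices H : ∀ (n : ℕ) (q : Polynomial ℝ), q.natDegree = n → q.degree ≤ p →
      ∑ j ∈ s, h j * q.eval (j : ℝ) = 0 from fun q => H _ q rfl
  intro n
  induction n using Nat.strong_induction_on with
  | _ n ih =>
    intro q hqn hq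
    by_cases hq0 : q = 0
    · simp [hq0]
    have hc0 : q.leadingCoeff ≠ 0 := Polynomial.leadingCoeff_ne_zero.mpr hq0
    have hdp : q.natDegree ≤ p := Polynomial.natDegree_le_iff_degree_le.mpr hq
    have hfd : (f q.natDegree).Monic := hmon _ hdp
    have hdegfd : q.degree = (Polynomial.C q.leadingCoeff * f q.natDegree).degree := by
      rw [Polynomial.degree_C_mul hc0, Polynomial.degree_eq_natDegree hfd.ne_zero,
        hdeg _ hdp, Polynomial.degree_eq_natDegree hq0]
    have hlc : q.leadingCoeff = (Polynomial.C q.leadingCoeff * f q.natDegree).leadingCoeff := by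
      rw [Polynomial.leadingCoeff_mul, Polynomial.leadingCoeff_C, hfd.leadingCoeff, mul_one]
    have hsub : (q - Polynomial.C q.leadingCoeff * f q.natDegree).degree < q.degree :=
      Polynomial.degree_sub_lt hdegfd hq0 hlc
    set r := q - Polynomial.C q.leadingCoeff * f q.natDegree with hr
    have hLr : ∑ j ∈ s, h j * r.eval (j : ℝ) = 0 := by
      by_cases hr0 : r = 0
      · simp [hr0]
      · exact ih r.natDegree (by
          have := Polynomial.natDegree_lt_natDegree hr0 hsub; omega) r rfl
          (le_trans hsub.le hq)
    have hqr : q = r + Polynomial.C q.leadingCoeff * f q.natDegree := by rw [hr]; ring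
    calc ∑ j ∈ s, h j * q.eval (j : ℝ)
        = ∑ j ∈ s, (h j * r.eval (j : ℝ)
            + q.leadingCoeff * (h j * (f q.natDegree).eval (j : ℝ))) := by
          refine Finset.sum_congr rfl fun j _ => ?_
          conv_lhs => rw [hqr]
          simp only [Polynomial.eval_add, Polynomial.eval_mul, Polynomial.eval_C]; ring
      _ = 0 := by
          rw [Finset.sum_add_distrib, ← Finset.mul_sum, hLr, h0 _ hdp, mul_zero, add_zero]

private lemma cast_descFactorial_real (m k : ℕ) :
    ((m.descFactorial k : ℕ) : ℝ) = ∏ i ∈ range k, ((m : ℝ) - i) := by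
  by_cases hk : k ≤ m
  · rw [Nat.descFactorial_eq_prod_range]
    push_cast
    refine Finset.prod_congr rfl fun i hi => ?_
    rw [Nat.cast_sub (le_of_lt (lt_of_lt_of_le (Finset.mem_range.mp hi) hk))]
  · rw [Nat.descFactorial_eq_zero_iff_lt.mpr (by omega), Nat.cast_zero]
    exact (Finset.prod_eq_zero (Finset.mem_range.mpr (by omega : m < k)) (by simp)).symm

private lemma key_reindex (h : ℤ → ℝ) (hh : (Function.support h).Finite)
    (q : Polynomial ℝ) (α : ℤ) :
    ∑ᶠ j : ℤ, h (α - j) * q.eval (j : ℝ)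
      = ∑ j ∈ hh.toFinset, h j * q.eval ((α : ℝ) - (j : ℝ)) := by
  rw [← finsum_comp_equiv (Equiv.subLeft α)]
  simp only [Equiv.subLeft_apply, sub_sub_cancel]
  rw [finsum_eq_sum_of_support_subset _ (s := hh.toFinset) (by
    intro j hj
    simp only [Function.mem_support] at hj
    simp only [Set.Finite.coe_toFinset, Function.mem_support]
    intro h0; rw [h0, zero_mul] at hj; exact hj rfl)]
  refine Finset.sum_congr rfl fun j _ => ?_
  push_cast
  ring_nf

private lemma iter_deriv_symbol (h : ℤ → ℝ) (hh : (Function.support h).Finite) (k : ℕ) :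
    iteratedDeriv k (fun z : ℝ => ∑ᶠ j : ℤ, h j * z ^ j) 1
      = ∑ j ∈ hh.toFinset, h j * ∏ i ∈ range k, ((j : ℝ) - i) := by
  have hfun : (fun z : ℝ => ∑ᶠ j : ℤ, h j * z ^ j)
      = fun z : ℝ => ∑ j ∈ hh.toFinset, h j * z ^ j := by
    funext z
    refine finsum_eq_sum_of_support_subset _ ?_
    intro j hj
    simp only [Function.mem_support] at hj
    simp only [Set.Finite.coe_toFinset, Function.mem_support]
    intro h0; rw [h0, zero_mul] at hj; exact hj rfl
  have main : ∀ (k : ℕ) (z : ℝ), z ≠ 0 →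
      deriv^[k] (fun z : ℝ => ∑ j ∈ hh.toFinset, h j * z ^ j) z
        = ∑ j ∈ hh.toFinset, h j * ((∏ i ∈ range k, ((j : ℝ) - i)) * z ^ ((j : ℤ) - k)) := by
    intro k
    induction k with
    | zero => intro z hz; simp
    | succ k ih =>
      intro z hz
      rw [Function.iterate_succ_apply']
      have hev : deriv^[k] (fun z : ℝ => ∑ j ∈ hh.toFinset, h j * z ^ j)
          =ᶠ[nhds z] fun w : ℝ =>
            ∑ j ∈ hh.toFinset, h j * ((∏ i ∈ range k, ((j : ℝ) - i)) * w ^ ((j : ℤ) - k)) := by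
        filter_upwards [IsOpen.mem_nhds isOpen_ne hz] with w hw
        exact ih w hw
      rw [hev.deriv_eq]
      rw [deriv_fun_sum (fun j _ => by
        exact ((differentiableAt_zpow.mpr (Or.inl hz)).const_mul _).const_mul _)]
      refine Finset.sum_congr rfl fun j _ => ?_
      rw [deriv_const_mul _ ((differentiableAt_zpow.mpr (Or.inl hz)).const_mul _),
        deriv_const_mul _ (differentiableAt_zpow.mpr (Or.inl hz)), deriv_zpow]
      rw [Finset.prod_range_succ]
      push_cast
      ring_nf
  rw [hfun, iteratedDeriv_eq_iterate, main k 1 one_ne_zero]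
  simp

private lemma toLaurent_dvd_pow_iff (p : ℕ) (F : Polynomial ℝ) :
    (T (1:ℤ) - 1) ^ (p + 1) ∣ Polynomial.toLaurent F ↔
      (X - 1 : Polynomial ℝ) ^ (p + 1) ∣ F := by
  have hmap : Polynomial.toLaurent ((X - 1 : Polynomial ℝ) ^ (p + 1))
      = (T (1:ℤ) - 1) ^ (p + 1) := by
    rw [map_pow, map_sub, Polynomial.toLaurent_X, map_one]
  constructor
  · rintro ⟨G, hG⟩
    obtain ⟨m, G', hG'⟩ := LaurentPolynomial.exists_T_pow G
    have heq : F * X ^ m = (X - 1 : Polynomial ℝ) ^ (p + 1) * G' := by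
      apply Polynomial.toLaurent_injective
      rw [map_mul, map_mul, Polynomial.toLaurent_X_pow, hG, hG', hmap, mul_assoc]
    have hcop0 : IsCoprime (X - 1 : Polynomial ℝ) X := ⟨-1, 1, by ring⟩
    have hcop : IsCoprime ((X - 1 : Polynomial ℝ) ^ (p + 1)) (X ^ m) := hcop0.pow
    exact hcop.dvd_of_dvd_mul_right ⟨G', heq⟩
  · rintro ⟨G, hG⟩
    exact ⟨Polynomial.toLaurent G, by rw [hG, map_mul, hmap]⟩

private lemma Tneg_sub_one_pow_dvd_iff (p : ℕ) (S : LaurentPolynomial ℝ) :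
    (T (-1:ℤ) - 1) ^ (p + 1) ∣ S ↔ (T (1:ℤ) - 1) ^ (p + 1) ∣ S := by
  have h1 : (T (1:ℤ) : LaurentPolynomial ℝ) * T (-1:ℤ) = 1 := by
    rw [← LaurentPolynomial.T_add]; norm_num
  have hfact : (T (-1:ℤ) - 1 : LaurentPolynomial ℝ)
      = (T (1:ℤ) - 1) * (-(T (-1:ℤ))) := by linear_combination h1
  rw [hfact, mul_pow,
    (((LaurentPolynomial.isUnit_T (R := ℝ) (-1)).neg).pow (p + 1)).mul_right_dvd]

open LaurentPolynomial in
/-- A finitely supported convolution operator annihilates all polynomial sequences of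
degree at most `p` iff the derivatives of its symbol up to order `p` vanish at `1`,
equivalently iff `(z⁻¹ - 1)^(p+1)` divides the symbol in the ring of Laurent
polynomials. -/
theorem convolution_annihilates_polynomials_iff (h : ℤ → ℝ)
    (hh : (Function.support h).Finite) (p : ℕ) :
    ((∀ q : Polynomial ℝ, q.degree ≤ p →
        ∀ α : ℤ, ∑ᶠ j : ℤ, h (α - j) * q.eval (j : ℝ) = 0) ↔
      (∀ k ≤ p, iteratedDeriv k (fun z : ℝ => ∑ᶠ j : ℤ, h j * z ^ j) 1 = 0)) ∧
    ((∀ q : Polynomial ℝ, q.degree ≤ p →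
        ∀ α : ℤ, ∑ᶠ j : ℤ, h (α - j) * q.eval (j : ℝ) = 0) ↔
      (T (-1) - 1) ^ (p + 1) ∣
        ∑ j ∈ hh.toFinset, LaurentPolynomial.C (h j) * T j) := by
  classical
  set s := hh.toFinset with hs
  -- A ↔ P
  have hAP : (∀ q : Polynomial ℝ, q.degree ≤ p →
      ∀ α : ℤ, ∑ᶠ j : ℤ, h (α - j) * q.eval (j : ℝ) = 0) ↔
      (∀ q : Polynomial ℝ, q.degree ≤ p → ∑ j ∈ s, h j * q.eval (j : ℝ) = 0) := by
    constructor
    · intro hA q hq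
      have hdeg : (q.comp (-X : Polynomial ℝ)).degree ≤ p := by
        refine Polynomial.natDegree_le_iff_degree_le.mp ?_
        rw [Polynomial.natDegree_comp, Polynomial.natDegree_neg, Polynomial.natDegree_X,
          mul_one]
        exact Polynomial.natDegree_le_iff_degree_le.mpr hq
      have := hA (q.comp (-X)) hdeg 0
      rw [key_reindex] at this
      simpa [Polynomial.eval_comp] using this
    · intro hP q hq α
      rw [key_reindex]
      have hdeg : (q.comp (Polynomial.C (α : ℝ) - X)).degree ≤ p := by
        refine Polynomial.natDegree_le_iff_degree_le.mp ?_
        rw [Polynomial.natDegree_comp, show (Polynomial.C (α : ℝ) - X) = -(X - Polynomial.C (α : ℝ)) by ring,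
          Polynomial.natDegree_neg, Polynomial.natDegree_X_sub_C, mul_one]
        exact Polynomial.natDegree_le_iff_degree_le.mpr hq
      have := hP (q.comp (Polynomial.C (α : ℝ) - X)) hdeg
      simpa [Polynomial.eval_comp] using this
  -- B ↔ P
  have hBP : (∀ k ≤ p, iteratedDeriv k (fun z : ℝ => ∑ᶠ j : ℤ, h j * z ^ j) 1 = 0) ↔
      (∀ q : Polynomial ℝ, q.degree ≤ p → ∑ j ∈ s, h j * q.eval (j : ℝ) = 0) := by
    constructor
    · intro hB
      refine span_monic h s p (fun k => ∏ i ∈ range k, (X - Polynomial.C (i : ℝ)))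
        (fun k _ => fam_monic _ k) (fun k _ => fam_natDegree _ k) ?_
      intro k hk
      have := hB k hk
      rw [iter_deriv_symbol h hh] at this
      simpa [Polynomial.eval_prod] using this
    · intro hP k hk
      rw [iter_deriv_symbol h hh]
      have := hP (∏ i ∈ range k, (X - Polynomial.C (i : ℝ))) (fam_degree_le _ hk)
      simpa [Polynomial.eval_prod] using this
  -- C ↔ P
  set N := s.sup (fun j => j.natAbs) with hN
  have hjN : ∀ j ∈ s, (0 : ℤ) ≤ j + N := by
    intro j hj
    have h2 : j.natAbs ≤ N := by simpa using Finset.le_sup (f := fun j : ℤ => j.natAbs) hj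
    omega
  set F : Polynomial ℝ := ∑ j ∈ s, Polynomial.C (h j) * X ^ (j + N).toNat with hF
  have htoL : Polynomial.toLaurent F
      = (∑ j ∈ s, LaurentPolynomial.C (h j) * T j) * T (N : ℤ) := by
    rw [hF, map_sum, Finset.sum_mul]
    refine Finset.sum_congr rfl fun j hj => ?_
    rw [Polynomial.C_mul_X_pow_eq_monomial, Polynomial.toLaurent_C_mul_T,
      mul_assoc, ← LaurentPolynomial.T_add, Int.toNat_of_nonneg (hjN j hj)]
  have hCdvd : ((T (-1:ℤ) - 1) ^ (p + 1) ∣ ∑ j ∈ s, LaurentPolynomial.C (h j) * T j)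
      ↔ (X - 1 : Polynomial ℝ) ^ (p + 1) ∣ F := by
    rw [Tneg_sub_one_pow_dvd_iff, ← (LaurentPolynomial.isUnit_T (R := ℝ) (N : ℤ)).dvd_mul_right,
      ← htoL, toLaurent_dvd_pow_iff]
  have hcoeff : ∀ d : ℕ, (F.comp (X + Polynomial.C (1:ℝ))).coeff d
      = ∑ j ∈ s, h j * (((j + N).toNat.choose d : ℕ) : ℝ) := by
    intro d
    rw [← Polynomial.taylor_apply, Polynomial.taylor_coeff, hF, map_sum,
      Polynomial.eval_finset_sum]
    refine Finset.sum_congr rfl fun j hj => ?_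
    rw [Polynomial.C_mul_X_pow_eq_monomial, Polynomial.hasseDeriv_monomial,
      Polynomial.eval_monomial, one_pow, mul_one, mul_comm]
  have hCiff : ((X - 1 : Polynomial ℝ) ^ (p + 1) ∣ F)
      ↔ ∀ d ≤ p, ∑ j ∈ s, h j * (((j + N).toNat.choose d : ℕ) : ℝ) = 0 := by
    rw [show (X - 1 : Polynomial ℝ) = X - Polynomial.C 1 by rw [map_one],
      Polynomial.X_sub_C_pow_dvd_iff, Polynomial.X_pow_dvd_iff]
    constructor
    · intro H d hd; rw [← hcoeff d]; exact H d (by omega)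
    · intro H d hd; rw [hcoeff d]; exact H d (by omega)
  have evalfam : ∀ (k : ℕ) (j : ℤ), j ∈ s →
      (∏ i ∈ range k, (X - Polynomial.C ((i : ℝ) - N))).eval (j : ℝ)
        = (k.factorial : ℝ) * (((j + N).toNat.choose k : ℕ) : ℝ) := by
    intro k j hj
    rw [Polynomial.eval_prod]
    have hterm : ∀ i ∈ range k, ((X : Polynomial ℝ) - Polynomial.C ((i : ℝ) - N)).eval (j : ℝ)
        = ((((j + N).toNat : ℕ) : ℝ) - i) := by
      intro i _
      simp only [Polynomial.eval_sub, Polynomial.eval_X, Polynomial.eval_C]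
      rw [show (((j + N).toNat : ℕ) : ℝ) = (((j + N).toNat : ℤ) : ℝ) by push_cast; ring,
        Int.toNat_of_nonneg (hjN j hj)]
      push_cast; ring
    rw [Finset.prod_congr rfl hterm, ← cast_descFactorial_real,
      Nat.descFactorial_eq_factorial_mul_choose]
    push_cast; ring
  have hchooseP : (∀ d ≤ p, ∑ j ∈ s, h j * (((j + N).toNat.choose d : ℕ) : ℝ) = 0)
      ↔ (∀ q : Polynomial ℝ, q.degree ≤ p → ∑ j ∈ s, h j * q.eval (j : ℝ) = 0) := by
    constructor
    · intro H
      refine span_monic h s p (fun k => ∏ i ∈ range k, (X - Polynomial.C ((i : ℝ) - N)))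
        (fun k _ => fam_monic _ k) (fun k _ => fam_natDegree _ k) ?_
      intro k hk
      have hEq : ∑ j ∈ s, h j * (∏ i ∈ range k, (X - Polynomial.C ((i : ℝ) - N))).eval (j : ℝ)
          = (k.factorial : ℝ) * ∑ j ∈ s, h j * (((j + N).toNat.choose k : ℕ) : ℝ) := by
        rw [Finset.mul_sum]
        refine Finset.sum_congr rfl fun j hj => ?_
        rw [evalfam k j hj]; ring
      rw [hEq, H k hk, mul_zero]
    · intro hP d hd
      have := hP (∏ i ∈ range d, (X - Polynomial.C ((i : ℝ) - N))) (fam_degree_le _ hd)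
      have hEq : ∑ j ∈ s, h j * (∏ i ∈ range d, (X - Polynomial.C ((i : ℝ) - N))).eval (j : ℝ)
          = (d.factorial : ℝ) * ∑ j ∈ s, h j * (((j + N).toNat.choose d : ℕ) : ℝ) := by
        rw [Finset.mul_sum]
        refine Finset.sum_congr rfl fun j hj => ?_
        rw [evalfam d j hj]; ring
      rw [hEq] at this
      exact (mul_eq_zero.mp this).resolve_left
        (Nat.cast_ne_zero.mpr d.factorial_ne_zero)
  exact ⟨hAP.trans hBP.symm, hAP.trans ((hchooseP.symm.trans hCiff.symm).trans hCdvd.symm)⟩
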